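/- Let A be an abelian category and V a 1-tilting object of A, i.e. all coproducts of copies of V exist, Gen(V) = Ker(Ext^1_A(V,−)), and Gen(V) is a cogenerating class in A. Then Ext^2_A(V, M) = 0 for every object M of A (V has projective dimension at most 1). -/

import Mathlib

open CategoryTheory CategoryTheory.Limits CategoryTheory.Abelian

universe w v u

namespace Paper

variable {C : Type u} [Category.{v} C] [Abelian C]

/-- `X` is `V`-generated. -/
def Gen (V : C) [∀ I : Type v, HasCoproduct (fun _ : I => V)] (X : C) : Prop :=
  ∃ (I : Type v) (p : (∐ (fun _ : I => V)) ⟶ X), Epi p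

/-- `Gen V` is stable under quotients. -/
lemma Gen.quotient {V : C} [∀ I : Type v, HasCoproduct (fun _ : I => V)] {X Y : C}
    (hX : Gen V X) (q : X ⟶ Y) (hq : Epi q) : Gen V Y := by
  obtain ⟨I, p, hp⟩ := hX
  exact ⟨I, p ≫ q, epi_comp p q⟩

/-- Every class in `Ext² V M` is killed by the pushforward along some monomorphism
`m : M ⟶ X`. (This is the effaceability of `Ext²` in the second variable, proved by
representing the class as a right fraction of cochain complex morphisms and pushing
out along the resulting "2-cocycle".) -/
lemma exists_mono_ext_comp_eq_zero [HasExt.{w} C] {V M : C} (e : Ext V M 2) :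
    ∃ (X : C) (m : M ⟶ X), Mono m ∧ e.comp (Ext.mk₀ m) (add_zero 2) = 0 := by
  letI := HasDerivedCategory.standard C
  haveI : (HomotopyCategory.quasiIso C (ComplexShape.up ℤ)).HasRightCalculusOfFractions := by
    rw [HomotopyCategory.quasiIso_eq_subcategoryAcyclic_W]
    infer_instance
  -- the canonical isomorphism `(singleFunctor C 0 ⋙ ⟦2⟧) ≅ singleFunctor C (-2)`
  let σ : DerivedCategory.singleFunctor C 0 ⋙
      shiftFunctor (DerivedCategory C) ((2 : ℕ) : ℤ) ≅ DerivedCategory.singleFunctor C (-2) :=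
    (DerivedCategory.singleFunctors C).shiftIso ((2 : ℕ) : ℤ) (-2) 0 (by norm_num)
  let ψ : (DerivedCategory.singleFunctor C 0).obj V ⟶
      (DerivedCategory.singleFunctor C (-2)).obj M := e.hom ≫ σ.hom.app M
  -- represent `ψ` as a right fraction
  obtain ⟨fr, hfr⟩ := Localization.exists_rightFraction DerivedCategory.Qh
    (HomotopyCategory.quasiIso C (ComplexShape.up ℤ))
    (show DerivedCategory.Qh.obj ((HomotopyCategory.quotient C (ComplexShape.up ℤ)).obj
        ((HomologicalComplex.single C (ComplexShape.up ℤ) 0).obj V)) ⟶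
      DerivedCategory.Qh.obj ((HomotopyCategory.quotient C (ComplexShape.up ℤ)).obj
        ((HomologicalComplex.single C (ComplexShape.up ℤ) (-2)).obj M)) from ψ)
  set Z : CochainComplex C ℤ := fr.X'.as with hZdef
  obtain ⟨s₀, hs₀⟩ :=
    (HomotopyCategory.quotient C (ComplexShape.up ℤ)).map_surjective (X := Z) fr.s
  obtain ⟨f₀, hf₀⟩ :=
    (HomotopyCategory.quotient C (ComplexShape.up ℤ)).map_surjective (X := Z) fr.f
  -- `Z` is exact in degree `-2`
  have hqis : QuasiIso s₀ := by
    have hs := fr.hs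
    rw [← hs₀] at hs
    exact (HomologicalComplex.mem_quasiIso_iff s₀).1
      ((HomotopyCategory.quotient_map_mem_quasiIso_iff s₀).1 hs)
  have hZ : Z.ExactAt (-2) := by
    rw [HomologicalComplex.exactAt_iff_isZero_homology]
    have : IsIso (HomologicalComplex.homologyMap s₀ (-2)) := by
      rw [← quasiIsoAt_iff_isIso_homologyMap]
      infer_instance
    exact IsZero.of_iso
      (HomologicalComplex.isZero_single_obj_homology _ 0 V (-2) (by norm_num))
      (asIso (HomologicalComplex.homologyMap s₀ (-2)))
  -- the short complex `Z ⁻³ ⟶ Z ⁻² ⟶ Z ⁻¹`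
  set S : ShortComplex C := Z.sc' (-3) (-2) (-1) with hSdef
  have hprev : (ComplexShape.up ℤ).prev (-2 : ℤ) = -3 := by
    rw [CochainComplex.prev]; norm_num
  have hnext2 : (ComplexShape.up ℤ).next (-2 : ℤ) = -1 := by
    rw [CochainComplex.next]; norm_num
  have hSex : S.Exact := by
    rw [← Z.exactAt_iff' (-3) (-2) (-1) hprev hnext2]
    exact hZ
  -- the cocycle `b : Z ⁻² ⟶ M`
  let b : Z.X (-2) ⟶ M :=
    f₀.f (-2) ≫ (HomologicalComplex.singleObjXSelf (ComplexShape.up ℤ) (-2) M).hom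
  have hb : S.f ≫ b = 0 := by
    have h := f₀.comm (-3) (-2)
    show Z.d (-3) (-2) ≫ f₀.f (-2) ≫ _ = 0
    rw [← Category.assoc, ← h, HomologicalComplex.single_obj_d, comp_zero, zero_comp]
  let β : S.opcycles ⟶ M := S.descOpcycles b hb
  haveI : Mono S.fromOpcycles := hSex.mono_fromOpcycles
  -- the pushout
  let P := pushout β S.fromOpcycles
  let m : M ⟶ P := pushout.inl β S.fromOpcycles
  haveI hm : Mono m := Abelian.mono_pushout_of_mono_g β S.fromOpcycles
  have key : Z.d (-2) (-1) ≫ pushout.inr β S.fromOpcycles = b ≫ m := by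
    have h1 : Z.d (-2) (-1) = S.pOpcycles ≫ S.fromOpcycles := S.p_fromOpcycles.symm
    have h2 : S.pOpcycles ≫ S.fromOpcycles ≫ pushout.inr β S.fromOpcycles =
        S.pOpcycles ≫ β ≫ pushout.inl β S.fromOpcycles := by
      rw [pushout.condition]
    have h3 : S.pOpcycles ≫ β = b := S.p_descOpcycles b hb
    exact (congrArg (· ≫ pushout.inr β S.fromOpcycles) h1).trans ((Category.assoc _ _ _).trans
      (h2.trans ((Category.assoc _ _ _).symm.trans (congrArg (· ≫ m) h3))))
  -- the null-homotopy
  let c : Z ⟶ (HomologicalComplex.single C (ComplexShape.up ℤ) (-2)).obj P :=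
    f₀ ≫ (HomologicalComplex.single C (ComplexShape.up ℤ) (-2)).map m
  have hrel : (ComplexShape.up ℤ).Rel (-2 : ℤ) (-1) := by
    simp only [ComplexShape.up_Rel]; norm_num
  have hrel3 : (ComplexShape.up ℤ).Rel (-3 : ℤ) (-2) := by
    simp only [ComplexShape.up_Rel]; norm_num
  have hcnull : Homotopy c 0 :=
    { hom := fun i j =>
        if h : i = -1 ∧ j = -2 then
          eqToHom (congrArg Z.X h.1) ≫ pushout.inr β S.fromOpcycles ≫
            (HomologicalComplex.singleObjXSelf (ComplexShape.up ℤ) (-2) P).inv ≫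
            eqToHom (congrArg
              (((HomologicalComplex.single C (ComplexShape.up ℤ) (-2)).obj P).X) h.2.symm)
        else 0
      zero := fun i j hij =>
        dif_neg (by rintro ⟨rfl, rfl⟩; exact hij hrel)
      comm := fun i => by
        by_cases hi : i = -2
        · subst hi
          have hd : dNext (-2) (fun i j =>
              if h : i = -1 ∧ j = -2 then
                eqToHom (congrArg Z.X h.1) ≫ pushout.inr β S.fromOpcycles ≫
                  (HomologicalComplex.singleObjXSelf (ComplexShape.up ℤ) (-2) P).inv ≫
                  eqToHom (congrArg
                    (((HomologicalComplex.single C (ComplexShape.up ℤ) (-2)).obj P).X) h.2.symm)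
              else 0) = Z.d (-2) (-1) ≫ (pushout.inr β S.fromOpcycles ≫
                (HomologicalComplex.singleObjXSelf (ComplexShape.up ℤ) (-2) P).inv) := by
            rw [dNext_eq _ hrel]
            rw [dif_pos ⟨rfl, rfl⟩]
            simp
          have hp : prevD (-2) (fun i j =>
              if h : i = -1 ∧ j = -2 then
                eqToHom (congrArg Z.X h.1) ≫ pushout.inr β S.fromOpcycles ≫
                  (HomologicalComplex.singleObjXSelf (ComplexShape.up ℤ) (-2) P).inv ≫
                  eqToHom (congrArg
                    (((HomologicalComplex.single C (ComplexShape.up ℤ) (-2)).obj P).X) h.2.symm)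
              else 0) = 0 := by
            rw [prevD_eq _ hrel3]
            rw [HomologicalComplex.single_obj_d, comp_zero]
          rw [hd, hp]
          show (f₀ ≫ (HomologicalComplex.single C (ComplexShape.up ℤ) (-2)).map m).f (-2) = _
          rw [HomologicalComplex.comp_f, HomologicalComplex.single_map_f_self]
          simp only [← Category.assoc]
          simp only [HomologicalComplex.zero_f, add_zero, ← Category.assoc]
          exact congrArg (· ≫ (HomologicalComplex.singleObjXSelf (ComplexShape.up ℤ) (-2) P).inv)
            key.symm |>.trans (Category.assoc _ _ _)
        · apply (HomologicalComplex.isZero_single_obj_X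
            (ComplexShape.up ℤ) (-2) P i hi).eq_of_tgt
      }
  have hc0 : (HomotopyCategory.quotient C (ComplexShape.up ℤ)).map c = 0 := by
    rw [HomotopyCategory.eq_of_homotopy c 0 hcnull, Functor.map_zero]
  -- conclusion: `ψ ≫ (singleFunctor C (-2)).map m = 0`
  have key2 : ψ ≫ (DerivedCategory.singleFunctor C (-2)).map m = 0 := by
    rw [show ψ = fr.map DerivedCategory.Qh (Localization.inverts _ _) from hfr]
    dsimp only [MorphismProperty.RightFraction.map]
    refine (Category.assoc _ _ _).trans ?_
    have : DerivedCategory.Qh.map ((HomotopyCategory.quotient C (ComplexShape.up ℤ)).map f₀) ≫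
        (DerivedCategory.singleFunctor C (-2)).map m = 0 := by
      exact ((DerivedCategory.Qh.map_comp
        ((HomotopyCategory.quotient C (ComplexShape.up ℤ)).map f₀)
        ((HomotopyCategory.quotient C (ComplexShape.up ℤ)).map
          ((HomologicalComplex.single C (ComplexShape.up ℤ) (-2)).map m))).symm.trans
        (congrArg DerivedCategory.Qh.map
          (((HomotopyCategory.quotient C (ComplexShape.up ℤ)).map_comp f₀
            ((HomologicalComplex.single C (ComplexShape.up ℤ) (-2)).map m)).symm.trans hc0))).trans
        (DerivedCategory.Qh.map_zero _ _)
    have this' : DerivedCategory.Qh.map fr.f ≫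
        (DerivedCategory.singleFunctor C (-2)).map m = 0 := by
      rw [← hf₀]; exact this
    exact (congrArg (inv (DerivedCategory.Qh.map fr.s) ≫ ·) this').trans comp_zero
  refine ⟨P, m, hm, ?_⟩
  apply Ext.ext
  rw [Ext.zero_hom, ← Ext.hom_comp_singleFunctor_map_shift]
  rw [← cancel_mono (σ.hom.app P), zero_comp, Category.assoc]
  have hσ : ((DerivedCategory.singleFunctor C 0).map m)⟦((2 : ℕ) : ℤ)⟧' ≫ σ.hom.app P =
      σ.hom.app M ≫ (DerivedCategory.singleFunctor C (-2)).map m := σ.hom.naturality m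
  rw [hσ, ← Category.assoc]
  exact key2

/-- if `V` is a 1-tilting object (all coproducts of copies of `V` exist,
`Gen(V) = Ker Ext¹(V,−)`, and `Gen(V)` is cogenerating), then `Ext²(V, M) = 0` for
every object `M`, i.e. `V` has projective dimension at most `1`. -/
theorem statement8 [HasExt.{w} C] (V : C) [∀ I : Type v, HasCoproduct (fun _ : I => V)]
    (htilt : ∀ X : C, Gen V X ↔ Subsingleton (Ext V X 1))
    (hcogen : ∀ X : C, ∃ (T : C) (i : X ⟶ T), Gen V T ∧ Mono i) :
    ∀ M : C, Subsingleton (Ext V M 2) := by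
  intro M
  have h0 : ∀ e : Ext V M 2, e = 0 := by
    intro e
    -- kill `e` by a mono, then embed further into an object of `Gen V`
    obtain ⟨X, m, hm, hme⟩ := exists_mono_ext_comp_eq_zero e
    obtain ⟨T, j, hTgen, hj⟩ := hcogen X
    haveI := hm
    haveI := hj
    haveI : Mono (m ≫ j) := mono_comp m j
    -- the short exact sequence `0 ⟶ M ⟶ T ⟶ coker ⟶ 0`
    let S₂ : ShortComplex C := ShortComplex.mk (m ≫ j) (cokernel.π (m ≫ j))
      (cokernel.condition (m ≫ j))
    have hS₂ : S₂.ShortExact :=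
      { exact := S₂.exact_of_g_is_cokernel (cokernelIsCokernel (m ≫ j))
        mono_f := inferInstanceAs (Mono (m ≫ j))
        epi_g := inferInstanceAs (Epi (cokernel.π (m ≫ j))) }
    -- `e` is killed by the pushforward along `m ≫ j`
    have hcomp : e.comp (Ext.mk₀ S₂.f) (add_zero 2) = 0 := by
      show e.comp (Ext.mk₀ (m ≫ j)) (add_zero 2) = 0
      rw [← Ext.mk₀_comp_mk₀ m j, ← Ext.comp_assoc_of_third_deg_zero e (Ext.mk₀ m) (Ext.mk₀ j)
        (add_zero 2), hme, Ext.zero_comp]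
    -- hence it comes from `Ext¹ V (coker)` which vanishes since `coker ∈ Gen V`
    obtain ⟨x, hx⟩ := Ext.covariant_sequence_exact₁ V hS₂ e hcomp (by norm_num : 1 + 1 = 2)
    have hgen : Gen V (cokernel (m ≫ j)) :=
      Gen.quotient hTgen (cokernel.π (m ≫ j)) inferInstance
    haveI : Subsingleton (Ext V (cokernel (m ≫ j)) 1) := (htilt _).1 hgen
    have hx0 : x = 0 := Subsingleton.elim x 0
    rw [← hx, hx0, Ext.zero_comp]
  exact ⟨fun a b => by rw [h0 a, h0 b]⟩

end Paper
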